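/- Fix strings T and R, and let z be the number of factors in the greedy Lempel–Ziv factorization of T relative to R. Then any α-optimal R-factorization of T consists of at most α·z phrases. -/

import Mathlib

/-- Length of the longest prefix of `T` that is a substring of `R`. -/
def lpf (R T : List ℕ) : ℕ :=
  Nat.findGreatest (fun ℓ => (T.take ℓ) <:+: R) T.length

/-- The greedy Lempel–Ziv factorization of `T` relative to `R`: each factor is
either a single symbol (when no nonempty prefix of the remaining suffix occurs
in `R`) or the longest prefix of the remaining suffix occurring in `R`. -/
def rlz (R : List ℕ) (T : List ℕ) : List (List ℕ) :=
  if hT : T = [] then []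
  else if h0 : lpf R T = 0 then [T.headI] :: rlz R T.tail
  else T.take (lpf R T) :: rlz R (T.drop (lpf R T))
termination_by T.length
decreasing_by
  · cases T with
    | nil => exact absurd rfl hT
    | cons a t => simp
  · have h1 : T.length ≠ 0 := fun h => hT (List.eq_nil_of_length_eq_zero h)
    simp only [List.length_drop]
    omega

/-- An `R`-factorization of `T`: a decomposition of `T` into nonempty phrases,
each of which is a single symbol or a substring of `R`. -/
def IsRFactorization (R T : List ℕ) (fs : List (List ℕ)) : Prop :=
  fs.flatten = T ∧ ∀ f ∈ fs, f ≠ [] ∧ (f.length = 1 ∨ f <:+: R)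

/-- `fs` is `α`-optimal: no `α` consecutive phrases concatenate to a substring
of `R`. -/
def AlphaOptimal (R : List ℕ) (α : ℕ) (fs : List (List ℕ)) : Prop :=
  ∀ i, i + α ≤ fs.length → ¬ (((fs.drop i).take α).flatten <:+: R)


lemma lpf_le (R T : List ℕ) : lpf R T ≤ T.length := Nat.findGreatest_le _

lemma take_lpf_infix (R T : List ℕ) : T.take (lpf R T) <:+: R := by
  exact Nat.findGreatest_spec (P := fun ℓ => (T.take ℓ) <:+: R) (n := T.length)
    (Nat.zero_le _) (by simpa using (List.nil_infix (l := R)))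

lemma le_lpf {R T : List ℕ} {m : ℕ} (h1 : m ≤ T.length) (h2 : T.take m <:+: R) :
    m ≤ lpf R T := Nat.le_findGreatest h1 h2

/-- Length of the first greedy phrase. -/
def glen (R T : List ℕ) : ℕ := max 1 (lpf R T)

lemma rlz_length (R : List ℕ) {T : List ℕ} (hT : T ≠ []) :
    (rlz R T).length = (rlz R (T.drop (glen R T))).length + 1 := by
  rw [rlz]
  rcases eq_or_ne (lpf R T) 0 with h0 | h0
  · simp [hT, h0, glen, List.drop_one]
  · have : glen R T = lpf R T := by simp [glen]; omega
    simp [hT, h0, this]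

lemma glen_pos (R T : List ℕ) : 1 ≤ glen R T := le_max_left _ _

lemma glen_le (R : List ℕ) {T : List ℕ} (hT : T ≠ []) : glen R T ≤ T.length := by
  have h1 := lpf_le R T
  have h2 : 1 ≤ T.length := by
    cases T with
    | nil => exact absurd rfl hT
    | cons a t => simp
  simp [glen]; omega

lemma rlz_drop_le (R T : List ℕ) (k : ℕ) :
    (rlz R (T.drop k)).length ≤ (rlz R T).length := by
  by_cases hT : T = []
  · simp [hT]
  by_cases hk : k = 0
  · simp [hk]
  have hg1 : 1 ≤ glen R T := glen_pos R T
  have hgle : glen R T ≤ T.length := glen_le R hT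
  have hlen : (rlz R T).length = (rlz R (T.drop (glen R T))).length + 1 := rlz_length R hT
  rcases le_or_gt (glen R T) k with h | h
  · have he : T.drop k = (T.drop (glen R T)).drop (k - glen R T) := by
      rw [List.drop_drop]; congr 1; omega
    rw [he]
    have := rlz_drop_le R (T.drop (glen R T)) (k - glen R T)
    omega
  · have hk1 : 1 ≤ k := by omega
    have hlpf : lpf R T = glen R T := by
      have : 2 ≤ glen R T := by omega
      simp [glen] at this ⊢; omega
    have hTk : T.drop k ≠ [] := by
      have : (T.drop k).length ≠ 0 := by simp; omega
      exact fun h => this (by simp [h])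
    have hinf : (T.drop k).take (glen R T - k) <:+: R := by
      have h1 : (T.drop k).take (glen R T - k) = (T.take (glen R T)).drop k := by
        rw [List.drop_take]
      have h2 : (T.take (glen R T)).drop k <:+: T.take (glen R T) :=
        (List.drop_suffix _ _).isInfix
      rw [h1]
      exact h2.trans (hlpf ▸ take_lpf_infix R T)
    have hge : glen R T - k ≤ lpf R (T.drop k) := by
      apply le_lpf _ hinf
      simp; omega
    have hge' : glen R T ≤ k + glen R (T.drop k) := by
      have : lpf R (T.drop k) ≤ glen R (T.drop k) := le_max_right _ _
      omega
    have hlen2 : (rlz R (T.drop k)).length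
        = (rlz R ((T.drop k).drop (glen R (T.drop k)))).length + 1 := rlz_length R hTk
    have he : (T.drop k).drop (glen R (T.drop k))
        = (T.drop (glen R T)).drop (k + glen R (T.drop k) - glen R T) := by
      rw [List.drop_drop, List.drop_drop]; congr 1; omega
    rw [he] at hlen2
    have := rlz_drop_le R (T.drop (glen R T)) (k + glen R (T.drop k) - glen R T)
    omega
termination_by T.length
decreasing_by
  all_goals
    simp only [List.length_drop]
    have : T.length ≠ 0 := fun h => hT (List.eq_nil_of_length_eq_zero h)
    omega

lemma main_aux (R : List ℕ) (α : ℕ) (fs : List (List ℕ)) (T : List ℕ)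
    (hfact : IsRFactorization R T fs) (hopt : AlphaOptimal R α fs) :
    fs.length ≤ α * (rlz R T).length := by
  obtain ⟨hflat, hph⟩ := hfact
  by_cases hα : α = 0
  · exfalso
    apply hopt 0 (by omega)
    subst hα
    simpa using (List.nil_infix (l := R))
  by_cases hfs : fs = []
  · simp [hfs]
  have hT : T ≠ [] := by
    cases fs with
    | nil => exact absurd rfl hfs
    | cons f t =>
      intro h
      have := hph f (by simp)
      have hfe : f = [] := by
        have : f ++ t.flatten = [] := by simpa [h] using hflat
        exact List.append_eq_nil_iff.mp this |>.1
      exact this.1 hfe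
  have hz : (rlz R T).length = (rlz R (T.drop (glen R T))).length + 1 := rlz_length R hT
  by_cases hle : fs.length ≤ α
  · calc fs.length ≤ α * 1 := by omega
      _ ≤ α * (rlz R T).length := Nat.mul_le_mul_left _ (by omega)
  push_neg at hle
  set P := (fs.take α).flatten with hP
  have hsplit : P ++ (fs.drop α).flatten = T := by
    rw [hP, ← List.flatten_append, List.take_append_drop, hflat]
  have hPpre : P = T.take P.length := by
    conv_lhs => rw [← List.take_left (l₁ := P) (l₂ := (fs.drop α).flatten)]
    rw [hsplit]
  have hrest : (fs.drop α).flatten = T.drop P.length := by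
    conv_lhs => rw [← List.drop_left (l₁ := P) (l₂ := (fs.drop α).flatten)]
    rw [hsplit]
  have hPlen : glen R T ≤ P.length := by
    by_contra h
    push_neg at h
    have h2 : P.length ≤ lpf R T := by
      rcases Nat.eq_zero_or_pos (lpf R T) with h0 | h0
      · have : glen R T = 1 := by simp [glen, h0]
        omega
      · have : glen R T = lpf R T := by simp [glen]; omega
        omega
    have hPR : P <:+: R := by
      have h3 : P = (T.take (lpf R T)).take P.length := by
        rw [List.take_take, min_eq_left h2, ← hPpre]
      rw [h3]
      exact (List.take_prefix _ _).isInfix.trans (take_lpf_infix R T)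
    exact hopt 0 (by omega) (by simpa using hPR)
  have hrfact : IsRFactorization R (T.drop P.length) (fs.drop α) :=
    ⟨hrest, fun f hf => hph f (List.drop_subset _ _ hf)⟩
  have hropt : AlphaOptimal R α (fs.drop α) := by
    intro i hi
    rw [List.drop_drop]
    exact hopt (α + i) (by simp at hi ⊢; omega)
  have hrec : (fs.drop α).length ≤ α * (rlz R (T.drop P.length)).length :=
    main_aux R α (fs.drop α) (T.drop P.length) hrfact hropt
  have hmono : (rlz R (T.drop P.length)).length ≤ (rlz R (T.drop (glen R T))).length := by
    have he : T.drop P.length = (T.drop (glen R T)).drop (P.length - glen R T) := by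
      rw [List.drop_drop]; congr 1; omega
    rw [he]; exact rlz_drop_le R _ _
  have hlen : fs.length = α + (fs.drop α).length := by simp; omega
  have h4 : α * (rlz R (T.drop P.length)).length
      ≤ α * (rlz R (T.drop (glen R T))).length := Nat.mul_le_mul_left _ hmono
  have h5 : α * (rlz R T).length = α * (rlz R (T.drop (glen R T))).length + α := by
    rw [hz, Nat.mul_add, Nat.mul_one]
  omega
termination_by fs.length
decreasing_by
  simp only [List.length_drop]
  have : fs.length ≠ 0 := fun h => hfs (List.eq_nil_of_length_eq_zero h)
  omega

/-- Any `α`-optimal `R`-factorization of `T` has at most `α·z` phrases,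
where `z = |rlz(T,R)|` is the size of the greedy relative LZ factorization. -/
theorem stmt7 (R T : List ℕ) (α : ℕ) (fs : List (List ℕ))
    (hfact : IsRFactorization R T fs) (hopt : AlphaOptimal R α fs) :
    fs.length ≤ α * (rlz R T).length :=
  main_aux R α fs T hfact hopt
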